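/- For all real parameters η > 0, φ > 0 and every natural number x, the Poisson mixture of the Copoun distribution has the closed form ∫₀^∞ (e^{-λ} λ^x / x!)·(η²/(φ+η))·(1 + φη²λ³/6)·e^{-ηλ} dλ = (η² / ((φ+η)(1+η)^{x+4}))·[(1+η)³ + (φη²/6)(x+1)(x+2)(x+3)]. -/

import Mathlib

open MeasureTheory Real Set

lemma pcd_integrableOn_pow_mul_exp (n : ℕ) {r : ℝ} (hr : 0 < r) :
    IntegrableOn (fun t : ℝ => t ^ n * Real.exp (-(r * t))) (Set.Ioi 0) := by
  have h := integrableOn_rpow_mul_exp_neg_mul_rpow (p := 1) (s := (n : ℝ))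
    (by exact_mod_cast neg_one_lt_zero.trans_le (Nat.cast_nonneg n)) one_pos hr
  refine h.congr_fun (fun t ht => ?_) measurableSet_Ioi
  beta_reduce
  rw [Real.rpow_natCast, Real.rpow_one, neg_mul]

lemma pcd_integral_pow_mul_exp (n : ℕ) {r : ℝ} (hr : 0 < r) :
    ∫ t in Set.Ioi (0 : ℝ), t ^ n * Real.exp (-(r * t))
      = (n.factorial : ℝ) / r ^ (n + 1) := by
  have h := Real.integral_rpow_mul_exp_neg_mul_Ioi (a := (n : ℝ) + 1) (by positivity) hr
  rw [show ((n : ℝ) + 1) - 1 = (n : ℝ) by ring] at h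
  have hcong : ∫ t in Set.Ioi (0 : ℝ), t ^ n * Real.exp (-(r * t))
      = ∫ t in Set.Ioi (0 : ℝ), t ^ ((n : ℝ)) * Real.exp (-(r * t)) := by
    refine setIntegral_congr_fun measurableSet_Ioi (fun t ht => ?_)
    rw [Real.rpow_natCast]
  rw [hcong, h, Real.Gamma_nat_eq_factorial n,
    show (n : ℝ) + 1 = ((n + 1 : ℕ) : ℝ) by push_cast; ring, Real.rpow_natCast]
  rw [one_div, inv_pow]
  ring

/-- The Poisson mixture of the Copoun distribution: closed form of the PCD pmf. -/
theorem pcd_pmf_closed_form (η φ : ℝ) (hη : 0 < η) (hφ : 0 < φ) (x : ℕ) :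
    ∫ l in Set.Ioi (0 : ℝ),
      (Real.exp (-l) * l ^ x / (Nat.factorial x : ℝ))
        * ((η ^ 2 / (φ + η)) * (1 + φ * η ^ 2 * l ^ 3 / 6) * Real.exp (-η * l))
      = (η ^ 2 / ((φ + η) * (1 + η) ^ (x + 4)))
          * ((1 + η) ^ 3
            + (φ * η ^ 2 / 6) * ((x : ℝ) + 1) * ((x : ℝ) + 2) * ((x : ℝ) + 3)) := by
  have hr : (0 : ℝ) < 1 + η := by linarith
  have hfx : (x.factorial : ℝ) ≠ 0 := by exact_mod_cast x.factorial_ne_zero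
  set C1 : ℝ := η ^ 2 / (φ + η) / (x.factorial : ℝ) with hC1
  set C2 : ℝ := η ^ 2 / (φ + η) * (φ * η ^ 2 / 6) / (x.factorial : ℝ) with hC2
  have hptwise : ∀ l : ℝ,
      (Real.exp (-l) * l ^ x / (Nat.factorial x : ℝ))
        * ((η ^ 2 / (φ + η)) * (1 + φ * η ^ 2 * l ^ 3 / 6) * Real.exp (-η * l))
      = C1 * (l ^ x * Real.exp (-((1 + η) * l)))
        + C2 * (l ^ (x + 3) * Real.exp (-((1 + η) * l))) := by
    intro l
    have hexp : Real.exp (-((1 + η) * l)) = Real.exp (-l) * Real.exp (-η * l) := by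
      rw [← Real.exp_add]; ring_nf
    rw [hexp, hC1, hC2]
    field_simp
    ring
  have hint : ∫ l in Set.Ioi (0 : ℝ),
      (Real.exp (-l) * l ^ x / (Nat.factorial x : ℝ))
        * ((η ^ 2 / (φ + η)) * (1 + φ * η ^ 2 * l ^ 3 / 6) * Real.exp (-η * l))
      = ∫ l in Set.Ioi (0 : ℝ),
        (C1 * (l ^ x * Real.exp (-((1 + η) * l)))
          + C2 * (l ^ (x + 3) * Real.exp (-((1 + η) * l)))) := by
    exact setIntegral_congr_fun measurableSet_Ioi (fun l _ => hptwise l)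
  rw [hint, integral_add (((pcd_integrableOn_pow_mul_exp x hr).const_mul C1))
      (((pcd_integrableOn_pow_mul_exp (x + 3) hr).const_mul C2)),
    integral_const_mul, integral_const_mul,
    pcd_integral_pow_mul_exp x hr, pcd_integral_pow_mul_exp (x + 3) hr]
  have hfac : (((x + 3).factorial : ℝ))
      = ((x : ℝ) + 1) * ((x : ℝ) + 2) * ((x : ℝ) + 3) * (x.factorial : ℝ) := by
    simp [Nat.factorial_succ, show x + 3 = x + 2 + 1 from rfl,
      show x + 2 = x + 1 + 1 from rfl]
    ring
  rw [hfac, hC1, hC2]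
  have hη3 : (φ + η) ≠ 0 := by positivity
  have hpow : (1 + η) ^ (x + 4) = (1 + η) ^ (x + 1) * (1 + η) ^ 3 := by
    rw [← pow_add]
  have hpne1 : (1 + η) ^ (x + 1) ≠ 0 := by positivity
  have hpne4 : (1 + η) ^ (x + 4) ≠ 0 := by positivity
  field_simp
  rw [hpow]
  ring
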